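/- arXiv:1604.00434 — 2 statements merged into one kernel-verified Lean document; each statement's English description precedes it below -/
import Mathlib

section
/- For positive definite Hermitian matrices A, B ∈ ℂ^{n×n}, and for all indices i, j, k ∈ {1,...,n} with j + k ≤ i + 1, the i-th largest eigenvalue of AB satisfies λ_i(AB) ≤ λ_j(A)·λ_k(B). -/
open Matrix ComplexOrder ComplexInnerProductSpace

/-- The square root of a positive semidefinite matrix, with its former Mathlib definition
(removed from Mathlib in favour of `CFC.sqrt`). -/
noncomputable def Matrix.PosSemidef.sqrt {𝕜 : Type*} [RCLike 𝕜] {n : Type*} [Fintype n]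
    [DecidableEq n] {A : Matrix n n 𝕜} (hA : A.PosSemidef) : Matrix n n 𝕜 :=
  hA.1.eigenvectorUnitary.1 * diagonal ((↑) ∘ (√·) ∘ hA.1.eigenvalues) *
    (star hA.1.eigenvectorUnitary : Matrix n n 𝕜)

namespace WangZhangAux

variable {n : ℕ}

lemma sqrt_mul_self' {A : Matrix (Fin n) (Fin n) ℂ} (hA : A.PosSemidef) :
    hA.sqrt * hA.sqrt = A := by
  conv_rhs => rw [hA.1.spectral_theorem, Unitary.conjStarAlgAut_apply]
  have hU : (star hA.1.eigenvectorUnitary : Matrix (Fin n) (Fin n) ℂ) * hA.1.eigenvectorUnitary.1 = 1 :=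
    Unitary.star_mul_self_of_mem hA.1.eigenvectorUnitary.2
  simp only [Matrix.PosSemidef.sqrt]
  have hD : diagonal (((↑) : ℝ → ℂ) ∘ (√·) ∘ hA.1.eigenvalues) * diagonal ((↑) ∘ (√·) ∘ hA.1.eigenvalues)
      = diagonal (RCLike.ofReal ∘ hA.1.eigenvalues) := by
    rw [diagonal_mul_diagonal]; congr 1; ext t
    simp only [Function.comp_apply]
    rw [← Complex.ofReal_mul, Real.mul_self_sqrt (hA.eigenvalues_nonneg t)]; rfl
  rw [← hD]
  calc _ = hA.1.eigenvectorUnitary.1 * diagonal (((↑) : ℝ → ℂ) ∘ (√·) ∘ hA.1.eigenvalues) *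
      ((star hA.1.eigenvectorUnitary : Matrix (Fin n) (Fin n) ℂ) * hA.1.eigenvectorUnitary.1) *
      diagonal ((↑) ∘ (√·) ∘ hA.1.eigenvalues) * (star hA.1.eigenvectorUnitary : Matrix (Fin n) (Fin n) ℂ) := by
        simp only [Matrix.mul_assoc]; rfl
    _ = _ := by rw [hU, Matrix.mul_one]; simp only [Matrix.mul_assoc]

lemma sqrt_isHermitian' {A : Matrix (Fin n) (Fin n) ℂ} (hA : A.PosSemidef) :
    hA.sqrt.IsHermitian := by
  simp only [Matrix.PosSemidef.sqrt]
  have := isHermitian_mul_mul_conjTranspose (A := diagonal (((↑) : ℝ → ℂ) ∘ (√·) ∘ hA.1.eigenvalues))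
    hA.1.eigenvectorUnitary.1 (by simp [IsHermitian, diagonal_conjTranspose])
  simpa [star_eq_conjTranspose] using this


lemma toEuclideanLin_eigenvectorBasis {M : Matrix (Fin n) (Fin n) ℂ} (hM : M.IsHermitian)
    (t : Fin n) :
    Matrix.toEuclideanLin M (hM.eigenvectorBasis t)
      = (hM.eigenvalues t : ℂ) • hM.eigenvectorBasis t := by
  apply PiLp.ext; intro i
  have h := congrFun (hM.mulVec_eigenvectorBasis t) i
  rw [Matrix.toEuclideanLin_apply]
  rw [PiLp.toLp_apply, h, PiLp.smul_apply, Pi.smul_apply, Complex.real_smul]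
  rfl

lemma rayleigh_eq {M : Matrix (Fin n) (Fin n) ℂ} (hM : M.IsHermitian)
    (x : EuclideanSpace ℂ (Fin n)) :
    RCLike.re (⟪x, Matrix.toEuclideanLin M x⟫) =
      ∑ t, hM.eigenvalues t * ‖hM.eigenvectorBasis.repr x t‖ ^ 2 := by
  set b := hM.eigenvectorBasis with hb
  conv_lhs => rw [show Matrix.toEuclideanLin M x
    = Matrix.toEuclideanLin M (∑ t, b.repr x t • b t) by rw [b.sum_repr x]]
  rw [map_sum]
  simp_rw [map_smul, hb, toEuclideanLin_eigenvectorBasis hM, ← hb]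
  rw [inner_sum, map_sum]
  congr 1; ext t
  rw [smul_smul, inner_smul_right]
  have h1 : (⟪x, b t⟫ : ℂ) = starRingEnd ℂ (b.repr x t) := by
    rw [b.repr_apply_apply, ← inner_conj_symm]
  rw [h1, mul_comm (b.repr x t) ((hM.eigenvalues t : ℂ)), mul_assoc, Complex.mul_conj]
  rw [RCLike.re_to_complex, ← Complex.ofReal_mul, Complex.ofReal_re, Complex.normSq_eq_norm_sq]

lemma norm_sq_eq_sum_repr {M : Matrix (Fin n) (Fin n) ℂ} (hM : M.IsHermitian)
    (x : EuclideanSpace ℂ (Fin n)) :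
    ‖x‖ ^ 2 = ∑ t, ‖hM.eigenvectorBasis.repr x t‖ ^ 2 := by
  rw [← hM.eigenvectorBasis.repr.norm_map x, EuclideanSpace.norm_eq,
    Real.sq_sqrt (by positivity)]

lemma repr_eq_zero_of_mem_span (b : OrthonormalBasis (Fin n) ℂ (EuclideanSpace ℂ (Fin n)))
    (S : Set (Fin n)) {x : EuclideanSpace ℂ (Fin n)}
    (hx : x ∈ Submodule.span ℂ (b '' S)) {t : Fin n} (ht : t ∉ S) : b.repr x t = 0 := by
  have hle : Submodule.span ℂ (b '' S) ≤ LinearMap.ker ((innerSL ℂ (b t)).toLinearMap) := by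
    rw [Submodule.span_le]
    rintro _ ⟨s, hs, rfl⟩
    simp only [SetLike.mem_coe, LinearMap.mem_ker, ContinuousLinearMap.coe_coe, innerSL_apply_apply]
    exact b.orthonormal.2 (fun h => ht (h ▸ hs))
  have := hle hx
  rw [LinearMap.mem_ker] at this
  rw [b.repr_apply_apply]
  simpa using this

lemma finrank_span_image (b : OrthonormalBasis (Fin n) ℂ (EuclideanSpace ℂ (Fin n)))
    (S : Finset (Fin n)) :
    Module.finrank ℂ (Submodule.span ℂ (b '' ↑S)) = S.card := by
  have h1 : LinearIndependent ℂ (fun s : {x // x ∈ S} => b s) :=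
    b.orthonormal.linearIndependent.comp _ Subtype.val_injective
  have h2 : Set.range (fun s : {x // x ∈ S} => b s) = b '' ↑S := by
    ext y; simp [Set.mem_image, Set.mem_range, Subtype.exists]
  rw [← h2, finrank_span_eq_card h1]
  simp

lemma rayleigh_le_of_mem_span {M : Matrix (Fin n) (Fin n) ℂ} (hM : M.IsHermitian)
    (S : Finset (Fin n)) (c : ℝ) (hc : ∀ t ∈ S, hM.eigenvalues t ≤ c)
    {x : EuclideanSpace ℂ (Fin n)}
    (hx : x ∈ Submodule.span ℂ (hM.eigenvectorBasis '' ↑S)) :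
    RCLike.re (⟪x, Matrix.toEuclideanLin M x⟫) ≤ c * ‖x‖ ^ 2 := by
  rw [rayleigh_eq hM, norm_sq_eq_sum_repr hM, Finset.mul_sum]
  apply Finset.sum_le_sum
  intro t _
  by_cases ht : t ∈ S
  · exact mul_le_mul_of_nonneg_right (hc t ht) (by positivity)
  · rw [repr_eq_zero_of_mem_span hM.eigenvectorBasis ↑S hx ht]; simp

lemma le_rayleigh_of_mem_span {M : Matrix (Fin n) (Fin n) ℂ} (hM : M.IsHermitian)
    (S : Finset (Fin n)) (c : ℝ) (hc : ∀ t ∈ S, c ≤ hM.eigenvalues t)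
    {x : EuclideanSpace ℂ (Fin n)}
    (hx : x ∈ Submodule.span ℂ (hM.eigenvectorBasis '' ↑S)) :
    c * ‖x‖ ^ 2 ≤ RCLike.re (⟪x, Matrix.toEuclideanLin M x⟫) := by
  rw [rayleigh_eq hM, norm_sq_eq_sum_repr hM, Finset.mul_sum]
  apply Finset.sum_le_sum
  intro t _
  by_cases ht : t ∈ S
  · exact mul_le_mul_of_nonneg_right (hc t ht) (by positivity)
  · rw [repr_eq_zero_of_mem_span hM.eigenvectorBasis ↑S hx ht]; simp

end WangZhangAux

open WangZhangAux


/-- Wang–Zhang eigenvalue inequality: for positive definite Hermitian `A, B` and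
decreasingly-ordered eigenvalue lists `μA, μB` of `A, B` and `μM` of `AB`
(whose eigenvalues agree with those of the Hermitian matrix `√A * B * √A`),
if `j + k ≤ i + 1` (1-based indexing) then `λ_i(AB) ≤ λ_j(A) * λ_k(B)`. -/
theorem eigenvalue_product_inequality
    {n : ℕ} {A B : Matrix (Fin n) (Fin n) ℂ}
    (hA : A.PosDef) (hB : B.PosDef)
    (hM : (hA.posSemidef.sqrt * B * hA.posSemidef.sqrt).IsHermitian)
    (μA μB μM : Fin n → ℝ)
    (hμA : Antitone μA) (hμB : Antitone μB) (hμM : Antitone μM)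
    (hA' : ∃ σ : Equiv.Perm (Fin n), μA = hA.1.eigenvalues ∘ σ)
    (hB' : ∃ σ : Equiv.Perm (Fin n), μB = hB.1.eigenvalues ∘ σ)
    (hM' : ∃ σ : Equiv.Perm (Fin n), μM = hM.eigenvalues ∘ σ)
    (i j k : Fin n) (hijk : (j : ℕ) + 1 + ((k : ℕ) + 1) ≤ (i : ℕ) + 1 + 1) :
    μM i ≤ μA j * μB k := by
  obtain ⟨σA, hσA⟩ := hA'
  obtain ⟨σB, hσB⟩ := hB'
  obtain ⟨σM, hσM⟩ := hM'
  set R := hA.posSemidef.sqrt with hR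
  have hRR : R * R = A := sqrt_mul_self' hA.posSemidef
  have hRH : R.IsHermitian := sqrt_isHermitian' hA.posSemidef
  set LR := Matrix.toEuclideanLin R with hLR
  set LB := Matrix.toEuclideanLin B with hLB
  set LA := Matrix.toEuclideanLin A with hLA
  set LM := Matrix.toEuclideanLin (R * B * R) with hLM
  have hmul : ∀ (P Q : Matrix (Fin n) (Fin n) ℂ) (x : EuclideanSpace ℂ (Fin n)),
      Matrix.toEuclideanLin (P * Q) x = Matrix.toEuclideanLin P (Matrix.toEuclideanLin Q x) := by
    intro P Q x
    rw [Matrix.toEuclideanLin_eq_toLin, Matrix.toLin_mul (PiLp.basisFun 2 ℂ (Fin n))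
      (PiLp.basisFun 2 ℂ (Fin n)) (PiLp.basisFun 2 ℂ (Fin n))]
    rfl
  have hcomp : ∀ x, LM x = LR (LB (LR x)) := by
    intro x
    rw [hLM, hLR, hLB, hmul (R * B) R, hmul R B]
  have hAcomp : ∀ x, LA x = LR (LR x) := by
    intro x
    rw [hLA, ← hRR, hLR, hmul R R]
  have hRsym : LinearMap.IsSymmetric LR := Matrix.isHermitian_iff_isSymmetric.1 hRH
  -- positivity of A as a quadratic form on EuclideanSpace
  have hApos : ∀ x : EuclideanSpace ℂ (Fin n), x ≠ 0 → 0 < RCLike.re (⟪x, LA x⟫) := by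
    intro x hx
    have h1 : (⟪x, LA x⟫ : ℂ)
        = dotProduct (star (WithLp.equiv 2 _ x)) (A *ᵥ (WithLp.equiv 2 _ x)) := by
      rw [EuclideanSpace.inner_eq_star_dotProduct, dotProduct_comm]; rfl
    rw [h1]
    have h2 := hA.dotProduct_mulVec_pos (x := WithLp.equiv 2 _ x) (fun h => hx (by ext t; exact congrFun h t))
    rw [RCLike.pos_iff] at h2
    exact h2.1
  -- LR is bijective
  have hLRinj : Function.Injective LR := by
    rw [← LinearMap.ker_eq_bot, LinearMap.ker_eq_bot']
    intro x hx0
    by_contra hx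
    have h2 : RCLike.re (⟪x, LA x⟫) = 0 := by
      rw [hAcomp, ← hRsym x (LR x), hx0]
      simp
    exact absurd h2 (ne_of_gt (hApos x hx))
  have hLRbij : Function.Bijective LR :=
    ⟨hLRinj, (LinearMap.injective_iff_surjective).1 hLRinj⟩
  set eR : EuclideanSpace ℂ (Fin n) ≃ₗ[ℂ] EuclideanSpace ℂ (Fin n) :=
    LinearEquiv.ofBijective LR hLRbij with heR
  -- index m = j + k
  have hjk : (j : ℕ) + (k : ℕ) ≤ (i : ℕ) := by omega
  set m : Fin n := ⟨(j : ℕ) + (k : ℕ), lt_of_le_of_lt hjk i.2⟩ with hm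
  -- subspaces
  set bM := hM.eigenvectorBasis with hbM
  set bA := hA.1.eigenvectorBasis with hbA
  set bB := hB.1.eigenvectorBasis with hbB
  set T : Submodule ℂ (EuclideanSpace ℂ (Fin n)) :=
    Submodule.span ℂ (bM '' ↑(Finset.image σM (Finset.Iic m))) with hT
  set V : Submodule ℂ (EuclideanSpace ℂ (Fin n)) :=
    Submodule.span ℂ (bA '' ↑(Finset.image σA (Finset.Ici j))) with hV
  set U : Submodule ℂ (EuclideanSpace ℂ (Fin n)) :=
    Submodule.span ℂ (bB '' ↑(Finset.image σB (Finset.Ici k))) with hU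
  set W : Submodule ℂ (EuclideanSpace ℂ (Fin n)) := (Submodule.comap LR U) ⊓ V with hW
  -- dimensions
  have hTd : Module.finrank ℂ T = (m : ℕ) + 1 := by
    rw [hT, finrank_span_image, Finset.card_image_of_injective _ σM.injective, Fin.card_Iic]
  have hVd : Module.finrank ℂ V = n - (j : ℕ) := by
    rw [hV, finrank_span_image, Finset.card_image_of_injective _ σA.injective, Fin.card_Ici]
  have hUd : Module.finrank ℂ U = n - (k : ℕ) := by
    rw [hU, finrank_span_image, Finset.card_image_of_injective _ σB.injective, Fin.card_Ici]
  have hcomapd : Module.finrank ℂ (Submodule.comap LR U) = n - (k : ℕ) := by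
    have h0 : Submodule.comap LR U = Submodule.map (eR.symm : EuclideanSpace ℂ (Fin n) →ₗ[ℂ] EuclideanSpace ℂ (Fin n)) U := by
      rw [← Submodule.comap_equiv_eq_map_symm]
      rfl
    rw [h0]
    exact (LinearEquiv.finrank_map_eq eR.symm U).trans hUd
  -- finrank bound on W and T ⊓ W
  have hfr : ∀ (p : Submodule ℂ (EuclideanSpace ℂ (Fin n))), Module.finrank ℂ p ≤ n := by
    intro p
    have := Submodule.finrank_le p
    rwa [finrank_euclideanSpace_fin] at this
  have hmval : (m : ℕ) = (j : ℕ) + (k : ℕ) := rfl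
  have hWd : n - (j : ℕ) - (k : ℕ) ≤ Module.finrank ℂ W := by
    have h1 := Submodule.finrank_sup_add_finrank_inf_eq (Submodule.comap LR U) V
    have h2 := hfr ((Submodule.comap LR U) ⊔ V)
    rw [← hW] at h1
    have hjn : (j : ℕ) < n := j.2
    have hkn : (k : ℕ) < n := k.2
    rw [hcomapd, hVd] at h1
    omega
  have hTWd : 0 < Module.finrank ℂ (T ⊓ W : Submodule ℂ (EuclideanSpace ℂ (Fin n))) := by
    have h1 := Submodule.finrank_sup_add_finrank_inf_eq T W
    have h2 := hfr (T ⊔ W)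
    have hjn : (j : ℕ) < n := j.2
    have hkn : (k : ℕ) < n := k.2
    have hin : (i : ℕ) < n := i.2
    rw [hTd] at h1
    omega
  haveI : Nontrivial (T ⊓ W : Submodule ℂ (EuclideanSpace ℂ (Fin n))) :=
    Module.nontrivial_of_finrank_pos (R := ℂ) hTWd
  obtain ⟨⟨x, hxTW⟩, hxne⟩ := exists_ne (0 : (T ⊓ W : Submodule ℂ (EuclideanSpace ℂ (Fin n))))
  have hxne' : x ≠ 0 := by
    intro h
    exact hxne (Subtype.ext h)
  have hxT : x ∈ T := hxTW.1
  have hxU : LR x ∈ U := hxTW.2.1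
  have hxV : x ∈ V := hxTW.2.2
  -- eigenvalue positivity for B
  have hμBpos : 0 < μB k := by
    rw [hσB]
    exact hB.eigenvalues_pos (σB k)
  -- chain of inequalities
  have key1 : μM m * ‖x‖ ^ 2 ≤ RCLike.re (⟪x, LM x⟫) := by
    apply le_rayleigh_of_mem_span hM _ (μM m) _ hxT
    intro t ht
    simp only [Finset.coe_image, Finset.mem_coe, Finset.mem_image, Finset.mem_Iic] at ht
    obtain ⟨s, hs, rfl⟩ := ht
    have := hμM hs
    rwa [hσM] at this ⊢
  have key2 : RCLike.re (⟪LR x, LB (LR x)⟫) ≤ μB k * ‖LR x‖ ^ 2 := by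
    apply rayleigh_le_of_mem_span hB.1 _ (μB k) _ hxU
    intro t ht
    simp only [Finset.coe_image, Finset.mem_coe, Finset.mem_image, Finset.mem_Ici] at ht
    obtain ⟨s, hs, rfl⟩ := ht
    have := hμB hs
    rwa [hσB] at this ⊢
  have key3 : RCLike.re (⟪x, LA x⟫) ≤ μA j * ‖x‖ ^ 2 := by
    apply rayleigh_le_of_mem_span hA.1 _ (μA j) _ hxV
    intro t ht
    simp only [Finset.coe_image, Finset.mem_coe, Finset.mem_image, Finset.mem_Ici] at ht
    obtain ⟨s, hs, rfl⟩ := ht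
    have := hμA hs
    rwa [hσA] at this ⊢
  have hnorm : ‖LR x‖ ^ 2 = RCLike.re (⟪x, LA x⟫) := by
    rw [hAcomp, ← hRsym x (LR x)]
    rw [← inner_self_eq_norm_sq (𝕜 := ℂ)]
  have hmid : RCLike.re (⟪x, LM x⟫) = RCLike.re (⟪LR x, LB (LR x)⟫) := by
    rw [hcomp, ← hRsym x (LB (LR x))]
  have hxnorm : 0 < ‖x‖ ^ 2 := by have := norm_pos_iff.2 hxne'; positivity
  have hmi : μM i ≤ μM m := hμM (by simp [hm, Fin.le_def, hjk])
  have chain : μM m * ‖x‖ ^ 2 ≤ μA j * μB k * ‖x‖ ^ 2 := by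
    calc μM m * ‖x‖ ^ 2 ≤ RCLike.re (⟪x, LM x⟫) := key1
      _ = RCLike.re (⟪LR x, LB (LR x)⟫) := hmid
      _ ≤ μB k * ‖LR x‖ ^ 2 := key2
      _ = μB k * RCLike.re (⟪x, LA x⟫) := by rw [hnorm]
      _ ≤ μB k * (μA j * ‖x‖ ^ 2) := by
          exact mul_le_mul_of_nonneg_left key3 hμBpos.le
      _ = μA j * μB k * ‖x‖ ^ 2 := by ring
  have := (mul_le_mul_iff_of_pos_right hxnorm).1 chain
  linarith [mul_le_mul_of_nonneg_right hmi (le_of_lt hxnorm), this,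
    (mul_le_mul_iff_of_pos_right hxnorm).2 hmi]
end

section
/- Let H ∈ ℂ^{m×n} and let S, S₀ be n×n Hermitian positive semidefinite matrices. Then log det(I + H S Hᴴ) ≤ log det(I + H S₀ Hᴴ) + Tr( Hᴴ (I + H S₀ Hᴴ)⁻¹ H (S − S₀) ). That is, the first-order Taylor expansion of S ↦ log det(I + H S Hᴴ) at S₀ is a global upper bound. -/
open Matrix ComplexOrder

private lemma posDef_conj_herm {k : ℕ} {B T : Matrix (Fin k) (Fin k) ℂ}
    (hB : B.PosDef) (hT : T.IsHermitian) (hdet : IsUnit T.det) : (T * B * T).PosDef := by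
  refine PosDef.of_dotProduct_mulVec_pos ?_ ?_
  · have := isHermitian_conjTranspose_mul_mul T hB.1
    rwa [hT.eq] at this
  · intro x hx
    have hTx : T *ᵥ x ≠ 0 := by
      have hinj := Matrix.mulVec_injective_iff_isUnit.mpr ((Matrix.isUnit_iff_isUnit_det T).mpr hdet)
      intro h
      exact hx (hinj (by simpa using h))
    have := hB.dotProduct_mulVec_pos hTx
    have hrw : T * B * T = Tᴴ * B * T := by rw [hT.eq]
    rw [hrw]
    simpa only [star_mulVec, dotProduct_mulVec, vecMul_vecMul] using this

open scoped MatrixOrder in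
private lemma logdet_key {k : ℕ} {A B : Matrix (Fin k) (Fin k) ℂ}
    (hA : A.PosDef) (hB : B.PosDef) :
    Real.log B.det.re ≤ Real.log A.det.re + (Matrix.trace (A⁻¹ * (B - A))).re := by
  classical
  have hAi : (A⁻¹).PosDef := hA.inv
  set T : Matrix (Fin k) (Fin k) ℂ := CFC.sqrt (A⁻¹) with hTdef
  have hT2 : T * T = A⁻¹ := CFC.sqrt_mul_sqrt_self _ hAi.posSemidef.nonneg
  have hTH : T.IsHermitian := (CFC.sqrt_nonneg (A⁻¹)).posSemidef.1
  have hTdet : IsUnit T.det := by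
    have h1 : T.det * T.det = (A⁻¹).det := by rw [← det_mul, hT2]
    have h2 : (A⁻¹).det ≠ 0 := hAi.det_pos.ne'
    have := h2; rw [← h1] at this
    exact (IsUnit.mul_iff.mp (isUnit_iff_ne_zero.mpr this)).1
  set M : Matrix (Fin k) (Fin k) ℂ := T * B * T with hMdef
  have hM : M.PosDef := posDef_conj_herm hB hTH hTdet
  -- determinant of M
  have hMdet : M.det = (A⁻¹).det * B.det := by
    rw [hMdef, det_mul, det_mul, mul_comm (T.det * B.det) T.det, ← mul_assoc, ← det_mul, hT2]
  -- trace of A⁻¹ * B equals trace of M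
  have htrM : Matrix.trace (A⁻¹ * B) = Matrix.trace M := by
    rw [hMdef, ← hT2]
    exact (trace_mul_cycle T B T).symm
  -- eigenvalues of M
  set lam := hM.1.eigenvalues with hlam
  have hdetM : M.det = (∏ i, (lam i : ℂ)) := hM.1.det_eq_prod_eigenvalues
  have htrMeig : Matrix.trace M = (∑ i, (lam i : ℂ)) := by
    exact hM.1.trace_eq_sum_eigenvalues
  have hlampos : ∀ i, 0 < lam i := fun i => hM.eigenvalues_pos i
  -- real positivity of determinants
  obtain ⟨ha, haim⟩ := Complex.lt_def.mp hA.det_pos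
  obtain ⟨hb, hbim⟩ := Complex.lt_def.mp hB.det_pos
  simp only [Complex.zero_re, Complex.zero_im] at ha haim hb hbim
  set a : ℝ := A.det.re with hadef
  set b : ℝ := B.det.re with hbdef
  have hAdet : A.det = (a : ℂ) := Complex.ext rfl (by simp [haim.symm])
  have hBdet : B.det = (b : ℂ) := Complex.ext rfl (by simp [hbim.symm])
  have hAinvdet : (A⁻¹).det = ((a⁻¹ : ℝ) : ℂ) := by
    rw [det_nonsing_inv, Ring.inverse_eq_inv', Complex.ofReal_inv, hAdet]
  -- M.det.re = ∏ lam, and = b / a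
  have hMdetre : M.det.re = ∏ i, lam i := by
    rw [hdetM, ← Complex.ofReal_prod, Complex.ofReal_re]
  have hMdetre' : M.det.re = a⁻¹ * b := by
    rw [hMdet, hAinvdet, hBdet, ← Complex.ofReal_mul, Complex.ofReal_re]
  -- trace identity
  have htr : (Matrix.trace (A⁻¹ * (B - A))).re = (∑ i, lam i) - k := by
    have hinv : A⁻¹ * A = 1 := Matrix.nonsing_inv_mul A hA.det_pos.ne'.isUnit
    rw [mul_sub, Matrix.trace_sub, hinv, Matrix.trace_one, htrM, htrMeig]
    simp
  rw [htr]
  have hprod : Real.log (∏ i, lam i) = ∑ i, Real.log (lam i) :=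
    Real.log_prod (fun i _ => (hlampos i).ne')
  have hsum : ∑ i, Real.log (lam i) ≤ (∑ i, lam i) - k := by
    have : ∑ i, Real.log (lam i) ≤ ∑ i, (lam i - 1) :=
      Finset.sum_le_sum (fun i _ => Real.log_le_sub_one_of_pos (hlampos i))
    simpa [Finset.sum_sub_distrib] using this
  have hlog : Real.log b - Real.log a = Real.log (M.det.re) := by
    rw [hMdetre', Real.log_mul (by positivity) hb.ne', Real.log_inv]
    ring
  have hfin : Real.log (M.det.re) ≤ (∑ i, lam i) - k := by
    rw [hMdetre, hprod]; exact hsum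
  linarith

/-- First-order (concavity) upper bound: for Hermitian PSD `S, S₀`,
`log det(I + H S Hᴴ) ≤ log det(I + H S₀ Hᴴ) + Tr(Hᴴ(I + H S₀ Hᴴ)⁻¹H (S − S₀))`. -/
theorem logdet_taylor_upper_bound
    {m n : ℕ} (H : Matrix (Fin m) (Fin n) ℂ) (S S₀ : Matrix (Fin n) (Fin n) ℂ)
    (hS : S.PosSemidef) (hS₀ : S₀.PosSemidef) :
    Real.log ((1 + H * S * Hᴴ).det.re) ≤
      Real.log ((1 + H * S₀ * Hᴴ).det.re) +
        (Matrix.trace (Hᴴ * (1 + H * S₀ * Hᴴ)⁻¹ * H * (S - S₀))).re := by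
  set A : Matrix (Fin m) (Fin m) ℂ := 1 + H * S₀ * Hᴴ with hAdef
  set B : Matrix (Fin m) (Fin m) ℂ := 1 + H * S * Hᴴ with hBdef
  have hA : A.PosDef := Matrix.PosDef.add_posSemidef Matrix.PosDef.one
    (hS₀.mul_mul_conjTranspose_same H)
  have hB : B.PosDef := Matrix.PosDef.add_posSemidef Matrix.PosDef.one
    (hS.mul_mul_conjTranspose_same H)
  have htr : Matrix.trace (Hᴴ * A⁻¹ * H * (S - S₀)) = Matrix.trace (A⁻¹ * (B - A)) := by
    have h2 : B - A = H * (S - S₀) * Hᴴ := by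
      rw [hAdef, hBdef, Matrix.mul_sub, Matrix.sub_mul]; abel
    have h1 : Hᴴ * A⁻¹ * H * (S - S₀) = Hᴴ * (A⁻¹ * (H * (S - S₀))) := by
      rw [Matrix.mul_assoc, Matrix.mul_assoc]
    have h3 : A⁻¹ * (H * (S - S₀)) * Hᴴ = A⁻¹ * (B - A) := by
      rw [h2]; exact Matrix.mul_assoc _ _ _
    rw [h1, trace_mul_comm, h3]
  calc Real.log B.det.re ≤ Real.log A.det.re + (Matrix.trace (A⁻¹ * (B - A))).re :=
        logdet_key hA hB
    _ = Real.log A.det.re + (Matrix.trace (Hᴴ * A⁻¹ * H * (S - S₀))).re := by rw [htr]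
end
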